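/- Let g : ℝ → ℝ be continuously differentiable with g'(u) > 0 for all u, lim_{u→−∞} g(u) = L₋ and lim_{u→+∞} g(u) = L₊, and let f : ℝ → ℝ be continuously differentiable with L₋ < f(0) < L₊. Then there exist δ > 0 and a₀ > 0 such that for every a with 0 < a < a₀ and every x with |x| < δ and f(x) = g(x/a), the Jacobian matrix [[(1/a)·g'(x/a), −1], [f'(x), −1]] of the system ẋ = g(x/a) − y, ẏ = f(x) − y at the equilibrium (x, f(x)) has negative determinant f'(x) − (1/a)·g'(x/a) < 0, so the equilibrium is a saddle. -/

import Mathlib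

/-- Let `g` be C¹ with everywhere positive derivative and limits `Lm`, `Lp` at `∓∞`,
and `f` C¹ with `Lm < f 0 < Lp`.  Then there are `δ > 0` and `a₀ > 0` such that for
every `0 < a < a₀` and every `x` with `|x| < δ` and `f x = g (x/a)`, the Jacobian
matrix `[[(1/a)·g'(x/a), −1], [f'(x), −1]]` of the system `ẋ = g(x/a) − y`,
`ẏ = f(x) − y` at the equilibrium `(x, f x)` has negative determinant
`f'(x) − (1/a)·g'(x/a) < 0`, so the equilibrium is a saddle. -/
theorem equilibrium_is_saddle_repelling_sliding
    (g f : ℝ → ℝ) (Lm Lp : ℝ)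
    (hg_smooth : ContDiff ℝ 1 g) (hg' : ∀ u, 0 < deriv g u)
    (hg_bot : Filter.Tendsto g Filter.atBot (nhds Lm))
    (hg_top : Filter.Tendsto g Filter.atTop (nhds Lp))
    (hf_smooth : ContDiff ℝ 1 f)
    (h_lo : Lm < f 0) (h_hi : f 0 < Lp) :
    ∃ δ > 0, ∃ a₀ > 0, ∀ a, 0 < a → a < a₀ →
      ∀ x, |x| < δ → f x = g (x / a) →
        Matrix.det !![(1 / a) * deriv g (x / a), -1; deriv f x, -1]
            = deriv f x - (1 / a) * deriv g (x / a) ∧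
        Matrix.det !![(1 / a) * deriv g (x / a), -1; deriv f x, -1] < 0 := by
  -- choose ε
  set ε : ℝ := min (f 0 - Lm) (Lp - f 0) / 2 with hε_def
  have hε : 0 < ε := by
    have := lt_min (sub_pos.mpr h_lo) (sub_pos.mpr h_hi)
    positivity
  have hLmε : Lm + ε ≤ f 0 - ε := by
    have h1 : 2 * ε ≤ f 0 - Lm := by
      have := min_le_left (f 0 - Lm) (Lp - f 0); linarith [this]
    linarith
  have hLpε : f 0 + ε ≤ Lp - ε := by
    have h2 : 2 * ε ≤ Lp - f 0 := by
      have := min_le_right (f 0 - Lm) (Lp - f 0); linarith [this]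
    linarith
  -- continuity of f at 0
  obtain ⟨δ, hδ, hδf⟩ := Metric.continuousAt_iff.mp (hf_smooth.continuous.continuousAt (x := 0)) ε hε
  -- u₁ from hg_bot
  obtain ⟨u₁, hu₁⟩ := (Filter.eventually_atBot).mp
    (hg_bot.eventually_lt_const (lt_add_of_pos_right Lm hε))
  obtain ⟨u₂', hu₂'⟩ := (Filter.eventually_atTop).mp
    (hg_top.eventually_const_lt (sub_lt_self Lp hε))
  set u₂ : ℝ := max u₁ u₂' with hu₂_def
  have hu₂ : ∀ u ≥ u₂, Lp - ε < g u := fun u hu => hu₂' u (le_trans (le_max_right _ _) hu)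
  have hu₁₂ : u₁ ≤ u₂ := le_max_left _ _
  -- c = min of deriv g on [u₁,u₂]
  have hgc : Continuous (deriv g) := hg_smooth.continuous_deriv le_rfl
  obtain ⟨uc, hucmem, huc⟩ := (isCompact_Icc (a := u₁) (b := u₂)).exists_isMinOn
    (Set.nonempty_Icc.mpr hu₁₂) hgc.continuousOn
  set c : ℝ := deriv g uc with hc_def
  have hc : 0 < c := hg' uc
  -- M = max of deriv f on [-δ, δ]
  have hfc : Continuous (deriv f) := hf_smooth.continuous_deriv le_rfl
  obtain ⟨xm, _, hxm⟩ := (isCompact_Icc (a := -δ) (b := δ)).exists_isMaxOn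
    (Set.nonempty_Icc.mpr (by linarith)) hfc.continuousOn
  set M : ℝ := deriv f xm with hM_def
  set a₀ : ℝ := c / (max M 0 + 1) with ha₀_def
  have ha₀ : 0 < a₀ := by
    apply div_pos hc
    have := le_max_right M 0; linarith
  refine ⟨δ, hδ, a₀, ha₀, fun a ha haa₀ x hx hfx => ?_⟩
  have hdet : Matrix.det !![(1 / a) * deriv g (x / a), -1; deriv f x, -1]
      = deriv f x - (1 / a) * deriv g (x / a) := by
    simp [Matrix.det_fin_two_of]; ring
  refine ⟨hdet, ?_⟩
  rw [hdet]
  -- f x close to f 0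
  have hxd : dist x 0 < δ := by simpa [Real.dist_eq] using hx
  have hfx0 : |f x - f 0| < ε := by
    have := hδf hxd
    simpa [Real.dist_eq] using this
  have h1 : Lm + ε < f x := by
    have := abs_lt.mp hfx0; linarith
  have h2 : f x < Lp - ε := by
    have := abs_lt.mp hfx0; linarith
  -- so x/a ∈ [u₁, u₂]
  have hxa1 : u₁ ≤ x / a := by
    by_contra h
    push_neg at h
    have := hu₁ (x / a) (le_of_lt h)
    rw [hfx] at h1; linarith
  have hxa2 : x / a ≤ u₂ := by
    by_contra h
    push_neg at h
    have := hu₂ (x / a) (le_of_lt h)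
    rw [hfx] at h2; linarith
  have hgderiv : c ≤ deriv g (x / a) := huc ⟨hxa1, hxa2⟩
  -- bound on deriv f x
  have hxmem : x ∈ Set.Icc (-δ) δ := by
    have := abs_lt.mp hx; exact ⟨by linarith, by linarith⟩
  have hfM : deriv f x ≤ M := hxm hxmem
  -- final inequality
  have hkey : max M 0 + 1 < (1 / a) * deriv g (x / a) := by
    have h3 : c / a₀ < c / a := by
      apply div_lt_div_of_pos_left hc ha haa₀
    have h4 : c / a₀ = max M 0 + 1 := by
      field_simp [ha₀_def]
      rw [ha₀_def, div_mul_cancel₀ c (ne_of_gt (by have := le_max_right M 0; linarith))]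
    have h5 : c / a ≤ deriv g (x / a) / a := by
      exact div_le_div_of_nonneg_right hgderiv ha.le
    calc max M 0 + 1 = c / a₀ := h4.symm
      _ < c / a := h3
      _ ≤ deriv g (x / a) / a := h5
      _ = (1 / a) * deriv g (x / a) := by ring
  have : deriv f x ≤ max M 0 := le_trans hfM (le_max_left _ _)
  linarith
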